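/- arXiv:0812.2941 — 5 statements merged into one kernel-verified Lean document; each statement's English description precedes it below -/
import Mathlib

section
/- Let T be an n×n primitive matrix with real entries (n ≥ 1). Then the spectral radius λ of T is a (real, positive) eigenvalue of T, and T admits a right eigenvector with all entries strictly positive for the eigenvalue λ, and likewise a left eigenvector (equivalently, a right eigenvector of the transpose of T) with all entries strictly positive for the eigenvalue λ. -/
open Matrix

/-- A real square matrix is primitive if it is entrywise nonnegative and some
positive power of it has all entries strictly positive. -/
def Matrix.IsPrimitive' {n : ℕ} (T : Matrix (Fin n) (Fin n) ℝ) : Prop :=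
  (∀ i j, 0 ≤ T i j) ∧ ∃ k : ℕ, 0 < k ∧ ∀ i j, 0 < (T ^ k) i j

open Finset

private lemma pow_mulVec_eig {n : ℕ} (T : Matrix (Fin n) (Fin n) ℝ) (v : Fin n → ℝ) (c : ℝ)
    (h : T.mulVec v = c • v) (k : ℕ) : (T ^ k).mulVec v = c ^ k • v := by
  induction k with
  | zero => simp
  | succ k ih =>
    rw [pow_succ', ← Matrix.mulVec_mulVec, ih, Matrix.mulVec_smul, h, smul_smul, ← pow_succ]

private lemma exists_pos_eigenvector {n : ℕ} (hn : 1 ≤ n) (T : Matrix (Fin n) (Fin n) ℝ)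
    (hT : T.IsPrimitive') :
    ∃ lam : ℝ, 0 < lam ∧ ∃ v : Fin n → ℝ, (∀ i, 0 < v i) ∧ T.mulVec v = lam • v := by
  obtain ⟨hTnn, k, hk, hTk⟩ := hT
  haveI : Nonempty (Fin n) := ⟨⟨0, hn⟩⟩
  have hne : (univ : Finset (Fin n)).Nonempty := univ_nonempty
  -- bounds on entries of T ^ k and T
  obtain ⟨⟨i₁, j₁⟩, -, hmin⟩ := Finset.exists_min_image (univ : Finset (Fin n × Fin n))
    (fun p => (T ^ k) p.1 p.2) (univ_nonempty)
  obtain ⟨⟨i₂, j₂⟩, -, hmax'⟩ := Finset.exists_max_image (univ : Finset (Fin n × Fin n))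
    (fun p => (T ^ k) p.1 p.2) (univ_nonempty)
  obtain ⟨⟨i₃, j₃⟩, -, hmax''⟩ := Finset.exists_max_image (univ : Finset (Fin n × Fin n))
    (fun p => T p.1 p.2) (univ_nonempty)
  set m : ℝ := (T ^ k) i₁ j₁ with hm_def
  set M : ℝ := (T ^ k) i₂ j₂ with hM_def
  set M' : ℝ := T i₃ j₃ with hM'_def
  have hm_pos : 0 < m := hTk i₁ j₁
  have hm_le : ∀ i j, m ≤ (T ^ k) i j := fun i j => hmin (i, j) (mem_univ _)
  have hM_ge : ∀ i j, (T ^ k) i j ≤ M := fun i j => hmax' (i, j) (mem_univ _)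
  have hM'_ge : ∀ i j, T i j ≤ M' := fun i j => hmax'' (i, j) (mem_univ _)
  have hM_pos : 0 < M := lt_of_lt_of_le hm_pos (hM_ge i₁ j₁)
  have hM'_nn : 0 ≤ M' := le_trans (hTnn i₃ j₃) le_rfl
  have hn' : (0 : ℝ) < n := by exact_mod_cast hn
  set ε : ℝ := m / (n * M) with hε_def
  have hε_pos : 0 < ε := div_pos hm_pos (mul_pos hn' hM_pos)
  set B : ℝ := M' / ε with hB_def
  have hB_nn : 0 ≤ B := div_nonneg hM'_nn hε_pos.le
  set S : Set (Fin n → ℝ) := {v | (∀ i, ε ≤ v i) ∧ ∑ i, v i = 1} with hS_def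
  -- S is compact
  have hS_closed : IsClosed S := by
    apply IsClosed.inter
    · have : {v : Fin n → ℝ | ∀ i, ε ≤ v i} = ⋂ i, {v | ε ≤ v i} := by ext v; simp
      show IsClosed {v : Fin n → ℝ | ∀ i, ε ≤ v i}
      rw [this]
      exact isClosed_iInter fun i => isClosed_le continuous_const (continuous_apply i)
    · exact isClosed_eq (by continuity) continuous_const
  have hS_le_one : ∀ v ∈ S, ∀ i, v i ≤ 1 := by
    rintro v ⟨h1, h2⟩ i
    calc v i ≤ ∑ j, v j := Finset.single_le_sum (fun j _ => le_trans hε_pos.le (h1 j)) (mem_univ i)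
    _ = 1 := h2
  have hS_cp : IsCompact S := by
    apply Metric.isCompact_of_isClosed_isBounded hS_closed
    apply (Metric.isBounded_closedBall (x := (0 : Fin n → ℝ)) (r := 1)).subset
    intro v hv
    simp only [Metric.mem_closedBall, dist_zero_right]
    refine (pi_norm_le_iff_of_nonneg zero_le_one).mpr fun i => ?_
    rw [Real.norm_eq_abs, abs_le]
    exact ⟨le_trans (by linarith) (hv.1 i), hS_le_one v hv i⟩
  set A : Set (ℝ × (Fin n → ℝ)) :=
    {p | p.1 ∈ Set.Icc 0 B ∧ p.2 ∈ S ∧ ∀ i, p.1 * p.2 i ≤ T.mulVec p.2 i} with hA_def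
  have hmv_cont : Continuous fun v : Fin n → ℝ => T.mulVec v :=
    LinearMap.continuous_of_finiteDimensional (Matrix.mulVecLin T)
  have hA_closed : IsClosed A := by
    apply IsClosed.inter (isClosed_Icc.preimage continuous_fst)
    apply IsClosed.inter (hS_closed.preimage continuous_snd)
    have : {p : ℝ × (Fin n → ℝ) | ∀ i, p.1 * p.2 i ≤ T.mulVec p.2 i}
        = ⋂ i, {p | p.1 * p.2 i ≤ T.mulVec p.2 i} := by ext p; simp
    show IsClosed {p : ℝ × (Fin n → ℝ) | ∀ i, p.1 * p.2 i ≤ T.mulVec p.2 i}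
    rw [this]
    refine isClosed_iInter fun i => isClosed_le ?_ ?_
    · exact continuous_fst.mul ((continuous_apply i).comp continuous_snd)
    · exact (continuous_apply i).comp (hmv_cont.comp continuous_snd)
  have hA_sub : A ⊆ (Set.Icc 0 B) ×ˢ S := fun p hp => ⟨hp.1, hp.2.1⟩
  have hA_cp : IsCompact A := (isCompact_Icc.prod hS_cp).of_isClosed_subset hA_closed hA_sub
  have hεn : ε ≤ 1 / n := by
    rw [hε_def, div_le_div_iff₀ (mul_pos hn' hM_pos) hn']
    calc m * n ≤ M * n := by nlinarith [hM_ge i₁ j₁]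
    _ = 1 * (n * M) := by ring
  have hA_ne : A.Nonempty := by
    refine ⟨(0, fun _ => 1 / n), ⟨le_rfl, hB_nn⟩, ⟨fun i => hεn, ?_⟩, fun i => ?_⟩
    · simp [Finset.sum_const, Finset.card_univ]
      field_simp
    · simp only [zero_mul, Matrix.mulVec, dotProduct]
      exact Finset.sum_nonneg fun j _ => mul_nonneg (hTnn i j) (by positivity)
  obtain ⟨⟨lam, v⟩, hmem, hmaxOn⟩ := hA_cp.exists_isMaxOn hA_ne continuous_fst.continuousOn
  obtain ⟨hlam_mem, hv_S, hineq⟩ := hmem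
  have i₀ : Fin n := ⟨0, hn⟩
  have hlam_nn : (0:ℝ) ≤ lam := hlam_mem.1
  have hmax : ∀ p ∈ A, p.1 ≤ lam := fun p hp => hmaxOn hp
  have hv_pos : ∀ i, 0 < v i := fun i => lt_of_lt_of_le hε_pos (hv_S.1 i)
  -- T v = lam • v
  have heig : T.mulVec v = lam • v := by
    by_contra hne'
    set z : Fin n → ℝ := T.mulVec v - lam • v with hz_def
    have hz_nn : ∀ i, 0 ≤ z i := fun i => by
      simp only [hz_def, Pi.sub_apply, Pi.smul_apply, smul_eq_mul, sub_nonneg]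
      exact hineq i
    have hz_ne : ∃ j₀, 0 < z j₀ := by
      have hz0 : z ≠ 0 := sub_ne_zero.mpr hne'
      obtain ⟨j₀, hj₀⟩ := Function.ne_iff.mp hz0
      exact ⟨j₀, lt_of_le_of_ne (hz_nn j₀) (Ne.symm hj₀)⟩
    obtain ⟨j₀, hj₀⟩ := hz_ne
    have hTkz_pos : ∀ i, 0 < (T ^ k).mulVec z i := by
      intro i
      simp only [Matrix.mulVec, dotProduct]
      exact Finset.sum_pos' (fun j _ => mul_nonneg (hTk i j).le (hz_nn j))
        ⟨j₀, mem_univ j₀, mul_pos (hTk i j₀) hj₀⟩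
    set u := (T ^ k).mulVec v with hu_def
    have hu_lb : ∀ i, m ≤ u i := by
      intro i
      calc m = m * ∑ j, v j := by rw [hv_S.2]; ring
      _ = ∑ j, m * v j := by rw [Finset.mul_sum]
      _ ≤ ∑ j, (T ^ k) i j * v j :=
        Finset.sum_le_sum fun j _ => mul_le_mul_of_nonneg_right (hm_le i j) (hv_pos j).le
      _ = u i := rfl
    have hu_ub : ∀ i, u i ≤ M := by
      intro i
      calc u i = ∑ j, (T ^ k) i j * v j := rfl
      _ ≤ ∑ j, M * v j :=
        Finset.sum_le_sum fun j _ => mul_le_mul_of_nonneg_right (hM_ge i j) (hv_pos j).le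
      _ = M * ∑ j, v j := by rw [Finset.mul_sum]
      _ = M := by rw [hv_S.2]; ring
    set s : ℝ := ∑ i, u i with hs_def
    have hs_pos : 0 < s := Finset.sum_pos (fun i _ => lt_of_lt_of_le hm_pos (hu_lb i)) hne
    have hs_ub : s ≤ n * M := by
      calc s ≤ ∑ _i : Fin n, M := Finset.sum_le_sum fun i _ => hu_ub i
      _ = n * M := by simp [Finset.sum_const, Finset.card_univ, nsmul_eq_mul]
    set u' : Fin n → ℝ := s⁻¹ • u with hu'_def
    have hu'_S : u' ∈ S := by
      constructor
      · intro i
        show ε ≤ s⁻¹ * u i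
        rw [hε_def, ← div_eq_inv_mul]
        rw [div_le_div_iff₀ (mul_pos hn' hM_pos) hs_pos]
        nlinarith [hu_lb i, hs_ub, hm_pos.le, hs_pos.le]
      · show ∑ i, s⁻¹ * u i = 1
        rw [← Finset.mul_sum, ← hs_def, inv_mul_cancel₀ hs_pos.ne']
    have hstrict_u : ∀ i, lam * u i < T.mulVec u i := by
      have hkey : T.mulVec u - lam • u = (T ^ k).mulVec z := by
        rw [hz_def, Matrix.mulVec_sub, Matrix.mulVec_smul, hu_def, Matrix.mulVec_mulVec,
          Matrix.mulVec_mulVec, pow_mul_comm']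
      intro i
      have := hTkz_pos i
      rw [← hkey] at this
      simp only [Pi.sub_apply, Pi.smul_apply, smul_eq_mul] at this
      linarith
    have hstrict : ∀ i, lam * u' i < T.mulVec u' i := by
      intro i
      have h1 : T.mulVec u' = s⁻¹ • T.mulVec u := by rw [hu'_def, Matrix.mulVec_smul]
      rw [h1]
      show lam * (s⁻¹ * u i) < s⁻¹ * (T.mulVec u i)
      have h2 := hstrict_u i
      have h3 : (0:ℝ) < s⁻¹ := inv_pos.mpr hs_pos
      nlinarith
    set δ : ℝ := univ.inf' hne (fun i => T.mulVec u' i - lam * u' i) with hδ_def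
    have hδ_pos : 0 < δ := by
      rw [hδ_def, Finset.lt_inf'_iff]
      exact fun i _ => sub_pos.mpr (hstrict i)
    have hδ_le : ∀ i, δ ≤ T.mulVec u' i - lam * u' i :=
      fun i => Finset.inf'_le _ (mem_univ i)
    have hu'_le_one : ∀ i, u' i ≤ 1 := hS_le_one u' hu'_S
    have hu'_pos : ∀ i, 0 < u' i := fun i => lt_of_lt_of_le hε_pos (hu'_S.1 i)
    have hineq' : ∀ i, (lam + δ) * u' i ≤ T.mulVec u' i := by
      intro i
      have h1 := hδ_le i
      have h2 := hu'_le_one i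
      have h3 := (hu'_pos i).le
      nlinarith
    have hTu'_ub : ∀ i, T.mulVec u' i ≤ M' := by
      intro i
      calc T.mulVec u' i = ∑ j, T i j * u' j := rfl
      _ ≤ ∑ j, M' * u' j :=
        Finset.sum_le_sum fun j _ => mul_le_mul_of_nonneg_right (hM'_ge i j) (hu'_pos j).le
      _ = M' * ∑ j, u' j := by rw [Finset.mul_sum]
      _ = M' := by rw [hu'_S.2]; ring
    have hlamδ_B : lam + δ ≤ B := by
      have h1 : (lam + δ) * ε ≤ (lam + δ) * u' i₀ :=
        mul_le_mul_of_nonneg_left (hu'_S.1 i₀) (by linarith)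
      have h2 := le_trans h1 (le_trans (hineq' i₀) (hTu'_ub i₀))
      rw [hB_def, le_div_iff₀ hε_pos]
      linarith
    have : lam + δ ≤ lam :=
      hmax (lam + δ, u') ⟨Set.mem_Icc.mpr ⟨show (0:ℝ) ≤ lam + δ by linarith, hlamδ_B⟩, hu'_S, hineq'⟩
    linarith
  -- conclude lam > 0
  have hpow := pow_mulVec_eig T v lam heig k
  have hpos0 : 0 < (T ^ k).mulVec v i₀ := by
    simp only [Matrix.mulVec, dotProduct]
    exact Finset.sum_pos (fun j _ => mul_pos (hTk i₀ j) (hv_pos j)) hne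
  rw [hpow] at hpos0
  simp only [Pi.smul_apply, smul_eq_mul] at hpos0
  have hlamk : 0 < lam ^ k := by
    by_contra h
    push_neg at h
    nlinarith [hv_pos i₀]
  have hlam_pos : 0 < lam := by
    rcases lt_or_eq_of_le hlam_nn with h | h
    · exact h
    · exfalso; rw [← h, zero_pow hk.ne'] at hlamk; exact lt_irrefl 0 hlamk
  exact ⟨lam, hlam_pos, v, hv_pos, heig⟩

private lemma mem_spectrum_of_eig {K : Type*} [Field K] {n : ℕ}
    (A : Matrix (Fin n) (Fin n) K) (c : K) (v : Fin n → K) (hv : v ≠ 0)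
    (h : A.mulVec v = c • v) : c ∈ spectrum K A := by
  have hdet : (algebraMap K (Matrix (Fin n) (Fin n) K) c - A).det = 0 :=
    Matrix.exists_mulVec_eq_zero_iff.mp ⟨v, hv, by
      rw [Algebra.algebraMap_eq_smul_one, Matrix.sub_mulVec, Matrix.smul_mulVec,
        Matrix.one_mulVec, h, sub_self]⟩
  rw [spectrum.mem_iff]
  exact fun hU => (isUnit_iff_ne_zero.mp ((Matrix.isUnit_iff_isUnit_det _).mp hU)) hdet

private lemma eig_of_mem_spectrum {K : Type*} [Field K] {n : ℕ}
    (A : Matrix (Fin n) (Fin n) K) (c : K) (h : c ∈ spectrum K A) :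
    ∃ v, v ≠ 0 ∧ A.mulVec v = c • v := by
  rw [spectrum.mem_iff] at h
  have hdet : (algebraMap K (Matrix (Fin n) (Fin n) K) c - A).det = 0 := by
    by_contra hd
    exact h ((Matrix.isUnit_iff_isUnit_det _).mpr (isUnit_iff_ne_zero.mpr hd))
  obtain ⟨v, hv, hv0⟩ := Matrix.exists_mulVec_eq_zero_iff.mpr hdet
  refine ⟨v, hv, ?_⟩
  rw [Algebra.algebraMap_eq_smul_one, Matrix.sub_mulVec, Matrix.smul_mulVec,
    Matrix.one_mulVec, sub_eq_zero] at hv0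
  exact hv0.symm

/-- The spectral radius of a real square matrix: the maximum of the absolute
values of its complex eigenvalues. -/
noncomputable def specRad {n : ℕ} (A : Matrix (Fin n) (Fin n) ℝ) : ℝ :=
  sSup {x : ℝ | ∃ β : ℂ, β ∈ spectrum ℂ (A.map (Complex.ofReal)) ∧ x = ‖β‖}

theorem perron_frobenius_positive_eigenvectors {n : ℕ} (hn : 1 ≤ n)
    (T : Matrix (Fin n) (Fin n) ℝ) (hT : T.IsPrimitive') :
    0 < specRad T ∧
    specRad T ∈ spectrum ℝ T ∧
    (∃ v : Fin n → ℝ, (∀ i, 0 < v i) ∧ T.mulVec v = specRad T • v) ∧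
    (∃ w : Fin n → ℝ, (∀ i, 0 < w i) ∧ Tᵀ.mulVec w = specRad T • w) := by
  haveI : Nonempty (Fin n) := ⟨⟨0, hn⟩⟩
  have i₀ : Fin n := ⟨0, hn⟩
  have hne : (Finset.univ : Finset (Fin n)).Nonempty := Finset.univ_nonempty
  obtain ⟨lam, hlam, v, hv, heig⟩ := exists_pos_eigenvector hn T hT
  obtain ⟨hTnn, k, hk, hTk⟩ := hT
  have hTt : Tᵀ.IsPrimitive' :=
    ⟨fun i j => hTnn j i, k, hk, fun i j => by
      rw [← Matrix.transpose_pow]; exact hTk j i⟩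
  obtain ⟨mu, hmu, w, hw, heigw⟩ := exists_pos_eigenvector hn Tᵀ hTt
  have hwv : 0 < w ⬝ᵥ v := by
    simp only [dotProduct]
    exact Finset.sum_pos (fun i _ => mul_pos (hw i) (hv i)) hne
  have hmu_lam : mu = lam := by
    have h1 : (Tᵀ.mulVec w) ⬝ᵥ v = w ⬝ᵥ (T.mulVec v) := by
      rw [Matrix.mulVec_transpose, ← Matrix.dotProduct_mulVec]
    rw [heigw, heig, smul_dotProduct, dotProduct_smul,
      smul_eq_mul, smul_eq_mul] at h1
    exact mul_right_cancel₀ hwv.ne' h1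
  set Mc := T.map (Complex.ofReal) with hMc
  have hvC : Mc.mulVec (fun i => (v i : ℂ)) = (lam : ℂ) • (fun i => (v i : ℂ)) := by
    funext i
    have := congrFun heig i
    simp only [Matrix.mulVec, dotProduct, hMc, Matrix.map_apply, Pi.smul_apply,
      smul_eq_mul] at this ⊢
    push_cast
    exact_mod_cast congrArg (Complex.ofReal) this
  have hvne : (fun i => (v i : ℂ)) ≠ 0 := fun h => by
    have := congrFun h i₀
    simp only [Pi.zero_apply, Complex.ofReal_eq_zero] at this
    exact (hv i₀).ne' this
  have hmemC : (lam : ℂ) ∈ spectrum ℂ Mc := mem_spectrum_of_eig Mc _ _ hvne hvC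
  -- the bound
  have hbound : ∀ β ∈ spectrum ℂ Mc, ‖β‖ ≤ lam := by
    intro β hβ
    obtain ⟨x, hx, hx_eig⟩ := eig_of_mem_spectrum Mc β hβ
    set y : Fin n → ℝ := fun i => ‖x i‖ with hy
    have hy_nn : ∀ i, 0 ≤ y i := fun i => norm_nonneg _
    obtain ⟨i₁, hi₁⟩ := Function.ne_iff.mp hx
    have hy_pos : 0 < y i₁ := norm_pos_iff.mpr hi₁
    have hstep : ∀ i, ‖β‖ * y i ≤ T.mulVec y i := by
      intro i
      have h1 : ‖β‖ * y i = ‖Mc.mulVec x i‖ := by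
        rw [hx_eig]; simp only [hy, Pi.smul_apply, smul_eq_mul, norm_mul]
      rw [h1]
      have h2 : Mc.mulVec x i = ∑ j, (T i j : ℂ) * x j := by
        simp [Matrix.mulVec, dotProduct, hMc, Matrix.map_apply]
      rw [h2]
      calc ‖∑ j, (T i j : ℂ) * x j‖ ≤ ∑ j, ‖(T i j : ℂ) * x j‖ :=
        norm_sum_le _ _
      _ = ∑ j, T i j * y j := Finset.sum_congr rfl fun j _ => by
        rw [norm_mul, Complex.norm_real, Real.norm_eq_abs, abs_of_nonneg (hTnn i j)]
      _ = T.mulVec y i := rfl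
    have hdot : ‖β‖ * (w ⬝ᵥ y) ≤ lam * (w ⬝ᵥ y) := by
      have h3 : w ⬝ᵥ (T.mulVec y) = lam * (w ⬝ᵥ y) := by
        rw [Matrix.dotProduct_mulVec, ← Matrix.mulVec_transpose, heigw, hmu_lam,
          smul_dotProduct, smul_eq_mul]
      have hL : ‖β‖ * (w ⬝ᵥ y) = ∑ i, w i * (‖β‖ * y i) := by
        simp only [dotProduct, Finset.mul_sum]
        exact Finset.sum_congr rfl fun i _ => by ring
      have hMid : ∑ i, w i * (‖β‖ * y i) ≤ ∑ i, w i * (T.mulVec y i) :=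
        Finset.sum_le_sum fun i _ => mul_le_mul_of_nonneg_left (hstep i) (hw i).le
      rw [hL]
      exact le_trans hMid (le_of_eq h3)
    have hwy : 0 < w ⬝ᵥ y := by
      simp only [dotProduct]
      exact Finset.sum_pos' (fun i _ => mul_nonneg (hw i).le (hy_nn i))
        ⟨i₁, Finset.mem_univ i₁, mul_pos (hw i₁) hy_pos⟩
    exact le_of_mul_le_mul_right hdot hwy
  have hlam_mem_set : lam ∈ {x : ℝ | ∃ β : ℂ, β ∈ spectrum ℂ Mc ∧ x = ‖β‖} :=
    ⟨(lam : ℂ), hmemC, by rw [Complex.norm_real, Real.norm_eq_abs, abs_of_pos hlam]⟩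
  have hub : ∀ x ∈ {x : ℝ | ∃ β : ℂ, β ∈ spectrum ℂ Mc ∧ x = ‖β‖}, x ≤ lam := by
    rintro x ⟨β, hβ, rfl⟩
    exact hbound β hβ
  have hspec : specRad T = lam := by
    apply le_antisymm
    · exact csSup_le ⟨lam, hlam_mem_set⟩ hub
    · exact le_csSup ⟨lam, hub⟩ hlam_mem_set
  rw [hspec]
  have hvne' : v ≠ 0 := fun h => (hv i₀).ne' (congrFun h i₀)
  refine ⟨hlam, mem_spectrum_of_eig T lam v hvne' heig, ⟨v, hv, heig⟩, ⟨w, hw, ?_⟩⟩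
  rw [heigw, hmu_lam]
end

section
/- Let T be an n×n primitive matrix with real entries and let λ be its spectral radius. Then for every complex eigenvalue λ' of T with λ' ≠ λ one has |λ'| < λ; in particular λ is a simple maximal eigenvalue in absolute value. -/
open Matrix

lemma mem_spec_iff {n : ℕ} (M : Matrix (Fin n) (Fin n) ℂ) (μ : ℂ) :
    μ ∈ spectrum ℂ M ↔ ∃ v, v ≠ 0 ∧ M *ᵥ v = μ • v := by
  rw [spectrum.mem_iff, Matrix.isUnit_iff_isUnit_det, isUnit_iff_ne_zero, not_not,
    ← Matrix.exists_mulVec_eq_zero_iff]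
  constructor
  · rintro ⟨v, hv, h⟩
    refine ⟨v, hv, ?_⟩
    have := h
    rw [sub_mulVec, sub_eq_zero, Algebra.algebraMap_eq_smul_one, smul_mulVec,
      one_mulVec] at this
    exact this.symm
  · rintro ⟨v, hv, h⟩
    refine ⟨v, hv, ?_⟩
    rw [sub_mulVec, sub_eq_zero, Algebra.algebraMap_eq_smul_one, smul_mulVec, one_mulVec]
    exact h.symm

lemma spec_iff_root {n : ℕ} (M : Matrix (Fin n) (Fin n) ℂ) (μ : ℂ) :
    μ ∈ spectrum ℂ M ↔ M.charpoly.IsRoot μ := by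
  rw [spectrum.mem_iff, Matrix.isUnit_iff_isUnit_det, isUnit_iff_ne_zero, not_not,
    Polynomial.IsRoot, Matrix.charpoly, eval_det, matPolyEquiv_charmatrix]
  rw [Polynomial.eval_sub, Polynomial.eval_X, Polynomial.eval_C]
  rw [Algebra.algebraMap_eq_smul_one]
  rw [show (Matrix.scalar (Fin n)) μ = μ • (1 : Matrix (Fin n) (Fin n) ℂ) by simp [Matrix.scalar_apply, Matrix.smul_eq_diagonal_mul]]

lemma spec_nonempty {n : ℕ} (hn : n ≠ 0) (M : Matrix (Fin n) (Fin n) ℂ) :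
    (spectrum ℂ M).Nonempty := by
  have hdeg : 0 < M.charpoly.degree := by
    rw [Polynomial.degree_eq_natDegree M.charpoly_monic.ne_zero,
      Matrix.charpoly_natDegree_eq_dim]
    simp only [Fintype.card_fin]
    exact_mod_cast Nat.pos_of_ne_zero hn
  obtain ⟨μ, hμ⟩ := Complex.exists_root hdeg
  exact ⟨μ, (spec_iff_root M μ).2 hμ⟩

lemma specRad_mem {n : ℕ} (hn : n ≠ 0) (A : Matrix (Fin n) (Fin n) ℝ) :
    ∃ β₀ ∈ spectrum ℂ (A.map (Complex.ofReal)), ‖β₀‖ = specRad A := by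
  set S := {x : ℝ | ∃ β : ℂ, β ∈ spectrum ℂ (A.map (Complex.ofReal)) ∧ x = ‖β‖}
  have hS : S = (‖·‖) '' (spectrum ℂ (A.map (Complex.ofReal))) := by
    ext x; exact ⟨fun ⟨β, h1, h2⟩ => ⟨β, h1, h2.symm⟩, fun ⟨β, h1, h2⟩ => ⟨β, h1, h2.symm⟩⟩
  have hfin : S.Finite := by rw [hS]; exact (Matrix.finite_spectrum _).image _
  have hne : S.Nonempty := by
    obtain ⟨β, hβ⟩ := spec_nonempty hn (A.map (Complex.ofReal))
    exact ⟨‖β‖, β, hβ, rfl⟩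
  have := hne.csSup_mem hfin
  obtain ⟨β₀, h1, h2⟩ := this
  exact ⟨β₀, h1, h2.symm⟩

lemma abs_le_specRad {n : ℕ} {A : Matrix (Fin n) (Fin n) ℝ} {β : ℂ}
    (hβ : β ∈ spectrum ℂ (A.map (Complex.ofReal))) : ‖β‖ ≤ specRad A := by
  set S := {x : ℝ | ∃ β : ℂ, β ∈ spectrum ℂ (A.map (Complex.ofReal)) ∧ x = ‖β‖}
  have hS : S = (‖·‖) '' (spectrum ℂ (A.map (Complex.ofReal))) := by
    ext x; exact ⟨fun ⟨β, h1, h2⟩ => ⟨β, h1, h2.symm⟩, fun ⟨β, h1, h2⟩ => ⟨β, h1, h2.symm⟩⟩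
  have hfin : S.Finite := by rw [hS]; exact (Matrix.finite_spectrum _).image _
  exact le_csSup hfin.bddAbove ⟨β, hβ, rfl⟩

lemma spec_empty (M : Matrix (Fin 0) (Fin 0) ℂ) : spectrum ℂ M = ∅ := by
  ext μ
  simp only [Set.mem_empty_iff_false, iff_false]
  rw [spectrum.mem_iff, not_not]
  exact isUnit_of_subsingleton _

lemma map_pow_ofReal {n : ℕ} (A : Matrix (Fin n) (Fin n) ℝ) (m : ℕ) :
    (A ^ m).map (Complex.ofReal) = (A.map Complex.ofReal) ^ m := by
  have : ∀ M : Matrix (Fin n) (Fin n) ℝ, M.map Complex.ofReal =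
      (Complex.ofRealHom.mapMatrix : Matrix (Fin n) (Fin n) ℝ →+* _) M := fun _ => rfl
  rw [this, this, map_pow]

lemma trace_pow_le {n : ℕ} (A : Matrix (Fin n) (Fin n) ℝ) {r : ℝ} (hr : 0 ≤ r)
    (hrad : ∀ β ∈ spectrum ℂ (A.map Complex.ofReal), ‖β‖ ≤ r)
    {m : ℕ} (hm : 0 < m) : (A ^ m).trace ≤ n * r ^ m := by
  set B := A.map Complex.ofReal with hB
  have htr : ((A ^ m).trace : ℂ) = (B ^ m).trace := by
    rw [← map_pow_ofReal]; simp [Matrix.trace, Matrix.map_apply]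
  have h1 : (B ^ m).trace = ((B ^ m).charpoly.roots).sum :=
    Matrix.trace_eq_sum_roots_charpoly _
  have hbound : ∀ x ∈ (B ^ m).charpoly.roots.map (‖·‖), x ≤ r ^ m := by
    intro x hx
    obtain ⟨μ, hμ, rfl⟩ := Multiset.mem_map.mp hx
    have hμs : μ ∈ spectrum ℂ (B ^ m) :=
      (spec_iff_root _ _).2 (Polynomial.isRoot_of_mem_roots hμ)
    rw [spectrum.map_pow_of_pos B hm] at hμs
    obtain ⟨β, hβ, rfl⟩ := hμs
    rw [norm_pow]
    exact pow_le_pow_left₀ (norm_nonneg _) (hrad β hβ) m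
  have hcard : Multiset.card ((B ^ m).charpoly.roots) ≤ n := by
    have := (B ^ m).charpoly.card_roots'
    rwa [Matrix.charpoly_natDegree_eq_dim, Fintype.card_fin] at this
  have hre : (A ^ m).trace = ((B ^ m).trace).re := by rw [← htr]; simp
  calc (A ^ m).trace ≤ ‖(B ^ m).trace‖ := by
        rw [hre]; exact Complex.re_le_norm _
    _ ≤ ((B ^ m).charpoly.roots.map (‖·‖)).sum := by
        rw [h1]
        simpa using norm_multiset_sum_le ((B ^ m).charpoly.roots)
    _ ≤ (Multiset.card ((B ^ m).charpoly.roots.map (‖·‖))) • (r ^ m) :=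
        Multiset.sum_le_card_nsmul _ _ hbound
    _ ≤ n * r ^ m := by
        rw [Multiset.card_map, nsmul_eq_mul]
        exact mul_le_mul_of_nonneg_right (by exact_mod_cast hcard) (pow_nonneg hr m)

lemma pow_entry_nonneg {n : ℕ} {A : Matrix (Fin n) (Fin n) ℝ} (hA : ∀ i j, 0 ≤ A i j)
    (m : ℕ) : ∀ i j, 0 ≤ (A ^ m) i j := by
  induction m with
  | zero => intro i j; by_cases h : i = j <;> simp [h, Matrix.one_apply]
  | succ m ih =>
    intro i j
    rw [pow_succ, Matrix.mul_apply]
    exact Finset.sum_nonneg fun k _ => mul_nonneg (ih i k) (hA k j)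

lemma pow_mulVec_ge {n : ℕ} {A : Matrix (Fin n) (Fin n) ℝ} (hA : ∀ i j, 0 ≤ A i j)
    {w : Fin n → ℝ} (hw : ∀ i, 0 ≤ w i) {c : ℝ} (hc : 0 ≤ c)
    (hAw : ∀ i, c * w i ≤ (A *ᵥ w) i) :
    ∀ m i, c ^ m * w i ≤ ((A ^ m) *ᵥ w) i := by
  intro m
  induction m with
  | zero => intro i; simp [Matrix.one_mulVec]
  | succ m ih =>
    intro i
    have h1 : (A ^ (m + 1)) *ᵥ w = A *ᵥ ((A ^ m) *ᵥ w) := by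
      rw [pow_succ', ← Matrix.mulVec_mulVec]
    rw [h1]
    have h2 : c ^ m * (c * w i) ≤ c ^ m * (A *ᵥ w) i :=
      mul_le_mul_of_nonneg_left (hAw i) (pow_nonneg hc m)
    calc c ^ (m + 1) * w i = c ^ m * (c * w i) := by ring
      _ ≤ c ^ m * (A *ᵥ w) i := h2
      _ = ∑ j, A i j * (c ^ m * w j) := by
          rw [Matrix.mulVec, dotProduct, Finset.mul_sum]; congr 1; ext j; ring
      _ ≤ ∑ j, A i j * ((A ^ m *ᵥ w) j) := by
          refine Finset.sum_le_sum fun j _ => mul_le_mul_of_nonneg_left (ih j) (hA i j)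
      _ = (A *ᵥ (A ^ m *ᵥ w)) i := rfl

lemma lower_bound {n : ℕ} (hn : n ≠ 0) {A : Matrix (Fin n) (Fin n) ℝ}
    (hA : ∀ i j, 0 < A i j) {w : Fin n → ℝ} (hw : ∀ i, 0 < w i) {c : ℝ} (hc : 0 < c)
    (hAw : ∀ i, c * w i ≤ (A *ᵥ w) i) : c ≤ specRad A := by
  haveI : NeZero n := ⟨hn⟩
  have hne : (Finset.univ : Finset (Fin n)).Nonempty := Finset.univ_nonempty
  set r := specRad A with hrdef
  have hr0 : 0 ≤ r := by
    obtain ⟨β₀, _, h⟩ := specRad_mem hn A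
    have h0 := norm_nonneg β₀
    rw [h] at h0; exact h0
  by_contra hcon
  push_neg at hcon   -- r < c
  -- min entry of A
  obtain ⟨p, -, hp⟩ := Finset.exists_min_image (Finset.univ : Finset (Fin n × Fin n))
    (fun p => A p.1 p.2) Finset.univ_nonempty
  set δ := A p.1 p.2 with hδdef
  have hδ : 0 < δ := hA _ _
  have hδle : ∀ i j, δ ≤ A i j := fun i j => hp (i, j) (Finset.mem_univ _)
  -- max and min of w
  obtain ⟨imax, -, hmax⟩ := Finset.exists_max_image (Finset.univ : Finset (Fin n)) w hne
  obtain ⟨imin, -, hmin⟩ := Finset.exists_min_image (Finset.univ : Finset (Fin n)) w hne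
  set wmax := w imax
  set wmin := w imin
  have hwmax : 0 < wmax := hw _
  have hwmin : 0 < wmin := hw _
  have key : ∀ m : ℕ, δ ^ 2 * (c ^ m * wmin) ≤ (↑n * wmax) * (↑n * r ^ (m + 2)) := by
    intro m
    have i0 : Fin n := ⟨0, Nat.pos_of_ne_zero hn⟩
    -- max entry in row i0 of A ^ m
    obtain ⟨jm, -, hjm⟩ := Finset.exists_max_image (Finset.univ : Finset (Fin n))
      (fun j => (A ^ m) i0 j) hne
    set P := (A ^ m) i0 jm with hPdef
    have hP0 : 0 ≤ P := pow_entry_nonneg (fun i j => (hA i j).le) m i0 jm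
    have h1 : c ^ m * wmin ≤ ↑n * P * wmax := by
      have := pow_mulVec_ge (fun i j => (hA i j).le) (fun i => (hw i).le) hc.le hAw m i0
      have h2 : ((A ^ m) *ᵥ w) i0 ≤ ∑ _j : Fin n, P * wmax := by
        rw [Matrix.mulVec, dotProduct]
        refine Finset.sum_le_sum fun j _ => ?_
        exact mul_le_mul (hjm j (Finset.mem_univ _)) (hmax j (Finset.mem_univ _)) (hw j).le hP0
      rw [Finset.sum_const, Finset.card_univ, Fintype.card_fin, nsmul_eq_mul] at h2
      calc c ^ m * wmin ≤ c ^ m * w i0 :=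
            mul_le_mul_of_nonneg_left (hmin i0 (Finset.mem_univ _)) (pow_nonneg hc.le m)
        _ ≤ ((A ^ m) *ᵥ w) i0 := this
        _ ≤ ↑n * (P * wmax) := h2
        _ = ↑n * P * wmax := by ring
    have h2 : δ ^ 2 * P ≤ ↑n * r ^ (m + 2) := by
      have htr : (A ^ (m + 2)).trace ≤ ↑n * r ^ (m + 2) :=
        trace_pow_le A hr0 (fun β hβ => abs_le_specRad hβ) (by omega)
      have hdiag : δ ^ 2 * P ≤ (A ^ (m + 2)) i0 i0 := by
        have hAm2 : A ^ (m + 2) = A * (A ^ m) * A := by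
          rw [pow_succ, pow_succ']
        rw [hAm2]
        have hAAm : δ * P ≤ (A * (A ^ m)) i0 jm := by
          rw [Matrix.mul_apply]
          calc δ * P ≤ A i0 i0 * (A ^ m) i0 jm :=
                mul_le_mul_of_nonneg_right (hδle _ _) hP0
            _ ≤ ∑ k, A i0 k * (A ^ m) k jm := by
                refine Finset.single_le_sum (f := fun k => A i0 k * (A ^ m) k jm)
                  (fun k _ => ?_) (Finset.mem_univ i0)
                exact mul_nonneg (hA _ _).le (pow_entry_nonneg (fun i j => (hA i j).le) m _ _)
        rw [Matrix.mul_apply]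
        calc δ ^ 2 * P = (δ * P) * δ := by ring
          _ ≤ (A * (A ^ m)) i0 jm * A jm i0 := by
              refine mul_le_mul hAAm (hδle _ _) hδ.le ?_
              rw [Matrix.mul_apply]
              exact Finset.sum_nonneg fun k _ => mul_nonneg (hA _ _).le
                (pow_entry_nonneg (fun i j => (hA i j).le) m _ _)
          _ ≤ ∑ k, (A * (A ^ m)) i0 k * A k i0 := by
              refine Finset.single_le_sum (f := fun k => (A * (A ^ m)) i0 k * A k i0)
                (fun k _ => ?_) (Finset.mem_univ jm)
              refine mul_nonneg ?_ (hA _ _).le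
              rw [Matrix.mul_apply]
              exact Finset.sum_nonneg fun l _ => mul_nonneg (hA _ _).le
                (pow_entry_nonneg (fun i j => (hA i j).le) m _ _)
      have hdiag2 : (A ^ (m + 2)) i0 i0 ≤ (A ^ (m + 2)).trace := by
        rw [Matrix.trace]
        refine Finset.single_le_sum (f := fun k => (A ^ (m + 2)).diag k)
          (fun k _ => ?_) (Finset.mem_univ i0)
        exact pow_entry_nonneg (fun i j => (hA i j).le) (m + 2) k k
      linarith
    calc δ ^ 2 * (c ^ m * wmin) ≤ δ ^ 2 * (↑n * P * wmax) :=
          mul_le_mul_of_nonneg_left h1 (by positivity)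
      _ = (↑n * wmax) * (δ ^ 2 * P) := by ring
      _ ≤ (↑n * wmax) * (↑n * r ^ (m + 2)) := by
          refine mul_le_mul_of_nonneg_left h2 ?_
          have : (0:ℝ) < n := by exact_mod_cast Nat.pos_of_ne_zero hn
          positivity
  have hn' : (0:ℝ) < n := by exact_mod_cast Nat.pos_of_ne_zero hn
  rcases eq_or_lt_of_le hr0 with hr | hr
  · have := key 0
    rw [← hr] at this
    simp at this
    have hpos : 0 < δ ^ 2 * wmin := by positivity
    linarith
  · -- r > 0, derive contradiction from geometric growth
    have hq : 1 < c / r := (one_lt_div hr).2 hcon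
    obtain ⟨m, hm⟩ := pow_unbounded_of_one_lt ((↑n * wmax) * (↑n * r ^ 2) / (δ ^ 2 * wmin)) hq
    have hkey := key m
    have hexp : (↑n * wmax) * (↑n * r ^ (m + 2)) = ((↑n * wmax) * (↑n * r ^ 2)) * r ^ m := by
      ring
    rw [hexp] at hkey
    have h3 : (c / r) ^ m ≤ ((↑n * wmax) * (↑n * r ^ 2)) / (δ ^ 2 * wmin) := by
      rw [div_pow, div_le_div_iff₀ (by positivity) (by positivity)]
      nlinarith [pow_pos hr m, pow_pos hc m]
    linarith

lemma triangle_eq {n : ℕ} (z : Fin n → ℂ)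
    (hsum : ‖∑ j, z j‖ = ∑ j, ‖z j‖)
    (hs0 : (∑ j, z j) ≠ 0) :
    ∃ d : ℂ, ‖d‖ = 1 ∧ ∀ j, z j = (‖z j‖ : ℂ) * d := by
  set s := ∑ j, z j with hsdef
  have habs : 0 < ‖s‖ := by
    simpa [norm_pos_iff] using hs0
  set d : ℂ := s / (‖s‖ : ℂ) with hddef
  have hd1 : ‖d‖ = 1 := by
    rw [hddef, norm_div, Complex.norm_real, Real.norm_eq_abs, abs_of_pos habs, div_self habs.ne']
  have hle : ∀ j, ((starRingEnd ℂ) d * z j).re ≤ ‖z j‖ := fun j => by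
    calc ((starRingEnd ℂ) d * z j).re ≤ ‖(starRingEnd ℂ) d * z j‖ :=
          Complex.re_le_norm _
      _ = ‖z j‖ := by rw [norm_mul, Complex.norm_conj, hd1, one_mul]
  have htot : ∑ j, ((starRingEnd ℂ) d * z j).re = ∑ j, ‖z j‖ := by
    have h1 : ∑ j, ((starRingEnd ℂ) d * z j).re = ((starRingEnd ℂ) d * s).re := by
      rw [hsdef, Finset.mul_sum]
      exact (Complex.re_sum _ _).symm
    have h2 : (starRingEnd ℂ) d * s = ((‖s‖ : ℝ) : ℂ) := by
      rw [hddef, map_div₀]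
      have hc : (starRingEnd ℂ) ((‖s‖ : ℂ)) = (‖s‖ : ℂ) := by
        simp [Complex.conj_ofReal]
      rw [hc, div_mul_eq_mul_div, ← Complex.normSq_eq_conj_mul_self,
        Complex.normSq_eq_norm_sq]
      rw [div_eq_iff (by exact_mod_cast habs.ne' : ((‖s‖ : ℂ)) ≠ 0)]
      push_cast
      ring
    rw [h1, h2, ← hsum]
    simp
  have heach : ∀ j ∈ Finset.univ, ((starRingEnd ℂ) d * z j).re = ‖z j‖ :=
    (Finset.sum_eq_sum_iff_of_le (fun j _ => hle j)).1 htot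
  refine ⟨d, hd1, fun j => ?_⟩
  have hj := heach j (Finset.mem_univ j)
  set w := (starRingEnd ℂ) d * z j with hwdef
  have habsw : ‖w‖ = ‖z j‖ := by
    rw [hwdef, norm_mul, Complex.norm_conj, hd1, one_mul]
  have him : w.im = 0 := by
    have h2 : (‖w‖) ^ 2 = w.re ^ 2 + w.im ^ 2 := by
      rw [Complex.sq_norm, Complex.normSq_apply]; ring
    rw [habsw, ← hj] at h2
    nlinarith [sq_nonneg w.im]
  have hw : w = (‖z j‖ : ℂ) := by
    rw [← hj]
    exact Complex.ext rfl him
  have hdd : d * (starRingEnd ℂ) d = 1 := by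
    rw [Complex.mul_conj, Complex.normSq_eq_norm_sq, hd1]; norm_num
  calc z j = (d * (starRingEnd ℂ) d) * z j := by rw [hdd, one_mul]
    _ = d * w := by rw [hwdef]; ring
    _ = (‖z j‖ : ℂ) * d := by rw [hw]; ring

lemma pos_dominant {n : ℕ} (hn : n ≠ 0) {A : Matrix (Fin n) (Fin n) ℝ}
    (hA : ∀ i j, 0 < A i j) {β : ℂ} (hβ : β ∈ spectrum ℂ (A.map (Complex.ofReal)))
    (habs : ‖β‖ = specRad A) : β = (specRad A : ℂ) := by
  haveI : NeZero n := ⟨hn⟩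
  have hne : (Finset.univ : Finset (Fin n)).Nonempty := Finset.univ_nonempty
  set ρ := specRad A with hρdef
  set B := A.map (Complex.ofReal) with hBdef
  obtain ⟨x, hx0, hxe⟩ := (mem_spec_iff B β).1 hβ
  set u : Fin n → ℝ := fun i => ‖x i‖ with hudef
  have hu0 : ∀ i, 0 ≤ u i := fun i => norm_nonneg _
  obtain ⟨i₁, hi₁⟩ : ∃ i, x i ≠ 0 := Function.ne_iff.1 hx0
  have hui₁ : 0 < u i₁ := by simpa [hudef] using norm_pos_iff.mpr hi₁
  have hρ0 : 0 ≤ ρ := habs ▸ norm_nonneg β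
  have hmvR : ∀ (M : Matrix (Fin n) (Fin n) ℝ) (v : Fin n → ℝ) (i : Fin n),
      (M *ᵥ v) i = ∑ j, M i j * v j := fun M v i => rfl
  have hmvC : ∀ (i : Fin n), (B *ᵥ x) i = ∑ j, B i j * x j := fun i => rfl
  have habsz : ∀ i j, ‖B i j * x j‖ = A i j * u j := by
    intro i j
    rw [norm_mul]
    congr 1
    simp [hBdef, Matrix.map_apply, Complex.norm_real, abs_of_pos (hA i j)]
  have hBx : ∀ i, ‖(B *ᵥ x) i‖ = ρ * u i := by
    intro i
    rw [hxe]
    simp only [Pi.smul_apply, smul_eq_mul, norm_mul, habs, hudef]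
  have hkey : ∀ i, ρ * u i ≤ (A *ᵥ u) i := by
    intro i
    rw [← hBx i, hmvC i, hmvR]
    calc ‖∑ j, B i j * x j‖ ≤ ∑ j, ‖B i j * x j‖ :=
          norm_sum_le _ _
      _ = ∑ j, A i j * u j := by simp_rw [habsz]
  have hwpos : ∀ i, 0 < (A *ᵥ u) i := by
    intro i
    rw [hmvR]
    calc (0:ℝ) < A i i₁ * u i₁ := mul_pos (hA i i₁) hui₁
      _ ≤ ∑ j, A i j * u j := Finset.single_le_sum (f := fun j => A i j * u j)
          (fun j _ => mul_nonneg (hA i j).le (hu0 j)) (Finset.mem_univ i₁)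
  by_cases hy : ∀ i, (A *ᵥ u) i = ρ * u i
  · -- equality case: triangle equality argument
    have hρpos : 0 < ρ := by
      rcases hρ0.eq_or_lt with h | h
      · exfalso
        have h2 := hwpos i₁
        rw [hy i₁, ← h, zero_mul] at h2
        exact lt_irrefl _ h2
      · exact h
    have hupos : ∀ i, 0 < u i := by
      intro i
      have h1 := hwpos i
      rw [hy i] at h1
      nlinarith [hu0 i]
    -- triangle equality at row i₁
    have hsum : ‖∑ j, B i₁ j * x j‖ = ∑ j, ‖B i₁ j * x j‖ := by
      rw [← hmvC, hBx]
      simp_rw [habsz]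
      rw [← hmvR A u i₁, hy i₁]
    have hs0 : (∑ j, B i₁ j * x j) ≠ 0 := by
      rw [← hmvC]
      intro h
      have h2 := hBx i₁
      rw [h] at h2
      simp only [norm_zero] at h2
      exact absurd h2.symm (ne_of_gt (mul_pos hρpos (hupos i₁)))
    obtain ⟨d, hd1, hzd⟩ := triangle_eq _ hsum hs0
    have hd0 : d ≠ 0 := by
      intro h; rw [h] at hd1; simp at hd1
    have hxj : ∀ j, x j = (u j : ℂ) * d := by
      intro j
      have h1 := hzd j
      rw [habsz i₁ j] at h1
      have hBij : B i₁ j = ((A i₁ j : ℝ) : ℂ) := rfl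
      have hBne : B i₁ j ≠ 0 := by
        rw [hBij]; exact_mod_cast (hA i₁ j).ne'
      apply mul_left_cancel₀ hBne
      rw [h1, hBij]
      push_cast
      ring
    -- eigen equation at i₁ gives β = ρ
    have he := congrFun hxe i₁
    rw [hmvC i₁] at he
    simp only [Pi.smul_apply, smul_eq_mul] at he
    have hL : ∑ j, B i₁ j * x j = ((ρ * u i₁ : ℝ) : ℂ) * d := by
      have h3 : ∀ j, B i₁ j * x j = ((A i₁ j * u j : ℝ) : ℂ) * d := by
        intro j
        rw [hxj j]
        have hBij : B i₁ j = ((A i₁ j : ℝ) : ℂ) := rfl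
        rw [hBij]; push_cast; ring
      simp_rw [h3]
      rw [← Finset.sum_mul, ← Complex.ofReal_sum]
      congr 2
      rw [← hmvR A u i₁]
      exact hy i₁
    rw [hL, hxj i₁] at he
    have hui₁c : ((u i₁ : ℝ) : ℂ) ≠ 0 := by exact_mod_cast (hupos i₁).ne'
    have he2 : ((ρ : ℝ) : ℂ) * ((u i₁ : ℝ) : ℂ) * d = (β * ((u i₁ : ℝ) : ℂ)) * d := by
      push_cast at he ⊢
      linear_combination he
    have he3 := mul_right_cancel₀ hd0 he2
    exact (mul_right_cancel₀ hui₁c he3).symm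
  · -- strict case: contradiction with lower_bound
    push_neg at hy
    obtain ⟨i₂, hi₂⟩ := hy
    have hi₂' : ρ * u i₂ < (A *ᵥ u) i₂ := lt_of_le_of_ne (hkey i₂) (Ne.symm hi₂)
    have hww : ∀ i, ρ * (A *ᵥ u) i < (A *ᵥ (A *ᵥ u)) i := by
      intro i
      rw [hmvR A (A *ᵥ u) i]
      have h1 : ρ * (A *ᵥ u) i = ∑ j, A i j * (ρ * u j) := by
        rw [hmvR A u i, Finset.mul_sum]
        congr 1; ext j; ring
      rw [h1]
      exact Finset.sum_lt_sum (fun j _ => mul_le_mul_of_nonneg_left (hkey j) (hA i j).le)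
        ⟨i₂, Finset.mem_univ i₂, mul_lt_mul_of_pos_left hi₂' (hA i i₂)⟩
    set c := Finset.univ.inf' hne (fun i => (A *ᵥ (A *ᵥ u)) i / (A *ᵥ u) i) with hcdef
    have hρc : ρ < c := by
      rw [hcdef, Finset.lt_inf'_iff]
      intro i _
      rw [lt_div_iff₀ (hwpos i)]
      calc ρ * (A *ᵥ u) i < (A *ᵥ (A *ᵥ u)) i := hww i
        _ = (A *ᵥ (A *ᵥ u)) i := rfl
    have hcpos : 0 < c := lt_of_le_of_lt hρ0 hρc
    have hAw : ∀ i, c * (A *ᵥ u) i ≤ (A *ᵥ (A *ᵥ u)) i := by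
      intro i
      have h4 : c ≤ (A *ᵥ (A *ᵥ u)) i / (A *ᵥ u) i := by
        rw [hcdef]
        exact Finset.inf'_le _ (Finset.mem_univ i)
      calc c * (A *ᵥ u) i ≤ ((A *ᵥ (A *ᵥ u)) i / (A *ᵥ u) i) * (A *ᵥ u) i :=
            mul_le_mul_of_nonneg_right h4 (hwpos i).le
        _ = (A *ᵥ (A *ᵥ u)) i := div_mul_cancel₀ _ (hwpos i).ne'
    have h5 := lower_bound hn hA hwpos hcpos hAw
    rw [← hρdef] at h5
    linarith

lemma specRad_nonneg {n : ℕ} (hn : n ≠ 0) (A : Matrix (Fin n) (Fin n) ℝ) :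
    0 ≤ specRad A := by
  obtain ⟨β₀, _, h⟩ := specRad_mem hn A
  rw [← h]; exact norm_nonneg _

lemma specRad_pow {n : ℕ} (hn : n ≠ 0) (A : Matrix (Fin n) (Fin n) ℝ) {k : ℕ} (hk : 0 < k) :
    specRad (A ^ k) = (specRad A) ^ k := by
  set B := A.map (Complex.ofReal) with hBdef
  have hspec : spectrum ℂ ((A ^ k).map (Complex.ofReal)) = (· ^ k) '' spectrum ℂ B := by
    rw [map_pow_ofReal, spectrum.map_pow_of_pos B hk]
  apply le_antisymm
  · apply csSup_le
    · obtain ⟨μ, hμ⟩ := spec_nonempty hn ((A ^ k).map (Complex.ofReal))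
      exact ⟨‖μ‖, μ, hμ, rfl⟩
    · rintro x ⟨μ, hμ, rfl⟩
      rw [hspec] at hμ
      obtain ⟨γ, hγ, rfl⟩ := hμ
      rw [norm_pow]
      exact pow_le_pow_left₀ (norm_nonneg _) (abs_le_specRad hγ) k
  · obtain ⟨β₀, hβ₀, hβ₀a⟩ := specRad_mem hn A
    have hmem : β₀ ^ k ∈ spectrum ℂ ((A ^ k).map (Complex.ofReal)) := by
      rw [hspec]; exact ⟨β₀, hβ₀, rfl⟩
    have := abs_le_specRad hmem
    rwa [norm_pow, hβ₀a] at this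

theorem primitive_spectral_radius_strictly_dominant {n : ℕ}
    (T : Matrix (Fin n) (Fin n) ℝ) (hT : T.IsPrimitive') :
    ∀ β : ℂ, β ∈ spectrum ℂ (T.map (Complex.ofReal)) → β ≠ (specRad T : ℂ) →
      ‖β‖ < specRad T := by
  intro β hβ hβne
  rcases Nat.eq_zero_or_pos n with hn | hnpos
  · subst hn
    rw [spec_empty] at hβ
    exact absurd hβ (Set.notMem_empty β)
  have hn : n ≠ 0 := hnpos.ne'
  obtain ⟨hT0, k, hk, hTk⟩ := hT
  obtain ⟨m, rfl⟩ : ∃ m, k = m + 1 := ⟨k - 1, (Nat.succ_pred_eq_of_pos hk).symm⟩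
  rcases lt_or_eq_of_le (abs_le_specRad hβ) with h | habs
  · exact h
  exfalso
  -- |β| = specRad T; show β = specRad T, contradiction
  have hρpos : 0 < specRad T := by
    rcases (specRad_nonneg hn T).eq_or_lt with h | h
    · exfalso
      apply hβne
      have : ‖β‖ = 0 := by rw [habs, ← h]
      rw [norm_eq_zero] at this
      rw [this, ← h]
      norm_num
    · exact h
  have hβ0 : β ≠ 0 := by
    intro h
    rw [h, norm_zero] at habs
    exact absurd habs.symm hρpos.ne'
  -- rows of T are nonzero
  have hrow : ∀ i, ∃ l, 0 < T i l := by
    intro i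
    have h1 := hTk i i
    rw [pow_succ', Matrix.mul_apply] at h1
    by_contra hcon
    push_neg at hcon
    have h2 : ∑ l, T i l * (T ^ m) l i = 0 := by
      refine Finset.sum_eq_zero fun l _ => ?_
      have : T i l = 0 := le_antisymm (hcon l) (hT0 i l)
      rw [this, zero_mul]
    rw [h2] at h1
    exact lt_irrefl _ h1
  -- T ^ (m + 2) is positive
  have hTk1 : ∀ i j, 0 < (T ^ (m + 2)) i j := by
    intro i j
    rw [show m + 2 = 1 + (m + 1) by ring, pow_add, pow_one, Matrix.mul_apply]
    obtain ⟨l, hl⟩ := hrow i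
    refine lt_of_lt_of_le (mul_pos hl (hTk l j)) ?_
    exact Finset.single_le_sum (f := fun l => T i l * (T ^ (m + 1)) l j)
      (fun l' _ => mul_nonneg (hT0 _ _) (hTk _ _).le) (Finset.mem_univ l)
  -- β ^ p = specRad T ^ p for p = m+1, m+2
  have hpow : ∀ p : ℕ, 0 < p → (∀ i j, 0 < (T ^ p) i j) →
      β ^ p = ((specRad T ^ p : ℝ) : ℂ) := by
    intro p hp hTp
    have hmem : β ^ p ∈ spectrum ℂ ((T ^ p).map (Complex.ofReal)) := by
      rw [map_pow_ofReal, spectrum.map_pow_of_pos _ hp]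
      exact ⟨β, hβ, rfl⟩
    have habs' : ‖β ^ p‖ = specRad (T ^ p) := by
      rw [norm_pow, habs, ← specRad_pow hn T hp]
    have := pos_dominant hn hTp hmem habs'
    rwa [specRad_pow hn T hp] at this
  have h1 := hpow (m + 1) (Nat.succ_pos m) hTk
  have h2 := hpow (m + 2) (Nat.succ_pos _) hTk1
  have h3 : β ^ (m + 2) = β ^ (m + 1) * β := by ring
  have h4 : ((specRad T ^ (m + 2) : ℝ) : ℂ) = ((specRad T ^ (m + 1) : ℝ) : ℂ) * (specRad T : ℂ) := by
    push_cast; ring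
  rw [h3, h1, h4] at h2
  have hρp : ((specRad T ^ (m + 1) : ℝ) : ℂ) ≠ 0 := by
    exact_mod_cast (pow_pos hρpos (m + 1)).ne'
  exact hβne (mul_left_cancel₀ hρp h2)
end

section
/- Let T and B be n×n real matrices with T primitive and T ≥ B ≥ 0 entrywise, and let λ be the spectral radius of T. If some complex eigenvalue β of B satisfies |β| = λ, then T = B. -/
open Matrix Filter
open scoped ENNReal Topology

section Aux

attribute [local instance] Matrix.linftyOpNormedAddCommGroup Matrix.linftyOpNormedRing
  Matrix.linftyOpNormedAlgebra

noncomputable local instance {n : ℕ} : CompleteSpace (Matrix (Fin n) (Fin n) ℂ) :=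
  (by infer_instance : CompleteSpace (Matrix (Fin n) (Fin n) ℂ))

private lemma specRad_lower {n : ℕ} (hn : 0 < n) (T : Matrix (Fin n) (Fin n) ℝ)
    (hT0 : ∀ i j, 0 ≤ T i j) (w : Fin n → ℝ) (hw : ∀ i, 0 < w i)
    (μ : ℝ) (hμ : 0 ≤ μ) (h : ∀ i, μ * w i ≤ (T *ᵥ w) i) : μ ≤ specRad T := by
  have : Nonempty (Fin n) := Fin.pos_iff_nonempty.mp hn
  set T' : Matrix (Fin n) (Fin n) ℂ := T.map (Complex.ofReal) with hT'
  set S : Set ℝ := {x : ℝ | ∃ β : ℂ, β ∈ spectrum ℂ T' ∧ x = ‖β‖} with hS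
  have hSbdd : BddAbove S := by
    refine ⟨‖T'‖, fun x hx => ?_⟩
    obtain ⟨b, hb, rfl⟩ := hx
    exact spectrum.norm_le_norm_of_mem hb
  have hSne : S.Nonempty := by
    obtain ⟨b, hb⟩ := spectrum.nonempty T'
    exact ⟨‖b‖, b, hb, rfl⟩
  have hS0 : 0 ≤ sSup S := by
    obtain ⟨x, b, hb, rfl⟩ := hSne
    exact le_trans (norm_nonneg b) (le_csSup hSbdd ⟨b, hb, rfl⟩)
  have hspecRadS : specRad T = sSup S := rfl
  rcases eq_or_lt_of_le hμ with hμ0 | hμpos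
  · rw [hspecRadS, ← hμ0]; exact hS0
  -- monotonicity of T
  have hmono : ∀ (u v : Fin n → ℝ), (∀ j, u j ≤ v j) → ∀ i, (T *ᵥ u) i ≤ (T *ᵥ v) i := by
    intro u v huv i
    simp only [Matrix.mulVec, dotProduct]
    exact Finset.sum_le_sum fun j _ => mul_le_mul_of_nonneg_left (huv j) (hT0 i j)
  -- power inequality
  have hpow : ∀ m : ℕ, ∀ i, μ ^ m * w i ≤ ((T ^ m) *ᵥ w) i := by
    intro m
    induction m with
    | zero => intro i; simp [Matrix.one_mulVec]
    | succ m ih =>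
      intro i
      have h1 : μ ^ (m + 1) * w i = μ ^ m * (μ * w i) := by ring
      have h2 : μ ^ m * (μ * w i) ≤ μ ^ m * (T *ᵥ w) i :=
        mul_le_mul_of_nonneg_left (h i) (pow_nonneg hμ m)
      have h3 : μ ^ m * (T *ᵥ w) i = (T *ᵥ (μ ^ m • w)) i := by
        simp [Matrix.mulVec_smul]
      have h4 : (T *ᵥ (μ ^ m • w)) i ≤ (T *ᵥ ((T ^ m) *ᵥ w)) i := by
        refine hmono _ _ (fun j => ?_) i
        simpa using ih j
      have h5 : (T *ᵥ ((T ^ m) *ᵥ w)) i = ((T ^ (m + 1)) *ᵥ w) i := by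
        rw [Matrix.mulVec_mulVec, ← pow_succ']
      linarith
  -- complexified vector
  set wc : Fin n → ℂ := fun j => (w j : ℂ) with hwc
  have hwcnorm : ∀ j, ‖wc j‖ = w j := by
    intro j; simp [hwc, abs_of_pos (hw j)]
  set i0 : Fin n := ⟨0, hn⟩
  have hwc0 : 0 < ‖wc‖ := by
    have h1 : ‖wc i0‖ ≤ ‖wc‖ := norm_le_pi_norm wc i0
    rw [hwcnorm i0] at h1
    linarith [hw i0]
  -- map of powers
  have hmap : ∀ m : ℕ, T' ^ m = (T ^ m).map (Complex.ofReal) := by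
    intro m
    induction m with
    | zero => ext i j; simp [Matrix.map_apply, Matrix.one_apply]; split <;> simp
    | succ m ih =>
      rw [pow_succ, pow_succ, ih]
      ext i j
      simp [Matrix.mul_apply, Matrix.map_apply, hT']
  have hmv : ∀ m : ℕ, ∀ i, ((T' ^ m) *ᵥ wc) i = (((T ^ m) *ᵥ w) i : ℂ) := by
    intro m i
    rw [hmap m]
    simp [Matrix.mulVec, dotProduct, Matrix.map_apply, hwc]
  -- norm lower bound
  set c : ℝ := w i0 / ‖wc‖ with hc
  have hcpos : 0 < c := div_pos (hw i0) hwc0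
  have hnorm : ∀ m : ℕ, c * μ ^ m ≤ ‖T' ^ m‖ := by
    intro m
    have h1 : μ ^ m * w i0 ≤ ((T ^ m) *ᵥ w) i0 := hpow m i0
    have h2 : ((T ^ m) *ᵥ w) i0 ≤ ‖((T' ^ m) *ᵥ wc) i0‖ := by
      rw [hmv m i0]
      exact le_abs_self _ |>.trans (by rw [Complex.norm_real]; exact le_rfl)
    have h3 : ‖((T' ^ m) *ᵥ wc) i0‖ ≤ ‖(T' ^ m) *ᵥ wc‖ := norm_le_pi_norm _ i0
    have h4 : ‖(T' ^ m) *ᵥ wc‖ ≤ ‖T' ^ m‖ * ‖wc‖ := Matrix.linfty_opNorm_mulVec _ _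
    have h5 : μ ^ m * w i0 ≤ ‖T' ^ m‖ * ‖wc‖ := by linarith
    rw [hc, div_mul_eq_mul_div, div_le_iff₀ hwc0]
    linarith [mul_comm (μ ^ m) (w i0)]
  -- Gelfand
  have hgelf := spectrum.pow_nnnorm_pow_one_div_tendsto_nhds_spectralRadius T'
  have hglim : Tendsto (fun m : ℕ => ENNReal.ofReal (c ^ ((m : ℝ)⁻¹) * μ)) atTop
      (𝓝 (ENNReal.ofReal μ)) := by
    have h1 : Tendsto (fun m : ℕ => ((m : ℝ)⁻¹)) atTop (𝓝 0) :=
      tendsto_inv_atTop_nhds_zero_nat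
    have h2 : Tendsto (fun m : ℕ => c ^ ((m : ℝ)⁻¹)) atTop (𝓝 1) := by
      have := (Real.continuousAt_const_rpow (a := c) (b := 0) (ne_of_gt hcpos)).tendsto.comp h1
      simpa [Real.rpow_zero, Function.comp_def] using this
    have h3 : Tendsto (fun m : ℕ => c ^ ((m : ℝ)⁻¹) * μ) atTop (𝓝 μ) := by
      simpa using h2.mul_const μ
    exact (ENNReal.continuous_ofReal.tendsto μ).comp h3
  have hle : ∀ᶠ m : ℕ in atTop, ENNReal.ofReal (c ^ ((m : ℝ)⁻¹) * μ) ≤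
      (‖T' ^ m‖₊ : ℝ≥0∞) ^ (1 / (m : ℝ)) := by
    filter_upwards [eventually_ge_atTop 1] with m hm
    have hm0 : m ≠ 0 := by omega
    have h1 : c * μ ^ m ≤ ‖T' ^ m‖ := hnorm m
    have h2 : ENNReal.ofReal (c * μ ^ m) ≤ (‖T' ^ m‖₊ : ℝ≥0∞) := by
      rw [← enorm_eq_nnnorm, ← ofReal_norm]
      exact ENNReal.ofReal_le_ofReal h1
    have h3 : ENNReal.ofReal (c * μ ^ m) ^ (1 / (m : ℝ)) ≤
        (‖T' ^ m‖₊ : ℝ≥0∞) ^ (1 / (m : ℝ)) :=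
      ENNReal.rpow_le_rpow h2 (by positivity)
    refine le_trans (le_of_eq ?_) h3
    rw [ENNReal.ofReal_rpow_of_pos (by positivity)]
    congr 1
    rw [Real.mul_rpow hcpos.le (by positivity), one_div,
      Real.pow_rpow_inv_natCast hμ hm0]
  have hfinal : ENNReal.ofReal μ ≤ spectralRadius ℂ T' :=
    le_of_tendsto_of_tendsto hglim hgelf hle
  -- convert to specRad
  have hspec_le : spectralRadius ℂ T' ≤ ENNReal.ofReal (sSup S) := by
    rw [spectralRadius]
    refine iSup₂_le fun k hk => ?_
    rw [← enorm_eq_nnnorm, ← ofReal_norm]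
    exact ENNReal.ofReal_le_ofReal (le_csSup hSbdd ⟨k, hk, rfl⟩)
  have hfin2 : ENNReal.ofReal μ ≤ ENNReal.ofReal (sSup S) := le_trans hfinal hspec_le
  rw [ENNReal.ofReal_le_ofReal_iff hS0] at hfin2
  rw [hspecRadS]
  exact hfin2


end Aux

private lemma eigenvector_of_mem_spectrum {n : ℕ} (B : Matrix (Fin n) (Fin n) ℂ) (β : ℂ)
    (hβ : β ∈ spectrum ℂ B) : ∃ x : Fin n → ℂ, x ≠ 0 ∧ B *ᵥ x = β • x := by
  rw [spectrum.mem_iff] at hβ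
  have hdet : (β • (1 : Matrix (Fin n) (Fin n) ℂ) - B).det = 0 := by
    by_contra h
    exact hβ (by simpa [Matrix.isUnit_iff_isUnit_det, isUnit_iff_ne_zero,
      Algebra.algebraMap_eq_smul_one] using h)
  obtain ⟨x, hx0, hx⟩ := (Matrix.exists_mulVec_eq_zero_iff).mpr hdet
  refine ⟨x, hx0, ?_⟩
  rw [Matrix.sub_mulVec, sub_eq_zero] at hx
  simpa [Matrix.smul_mulVec, Matrix.one_mulVec] using hx.symm

theorem dominated_matrix_eigenvalue_eq_spectral_radius_imp_eq {n : ℕ}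
    (T B : Matrix (Fin n) (Fin n) ℝ) (hT : T.IsPrimitive')
    (hB0 : ∀ i j, 0 ≤ B i j) (hBT : ∀ i j, B i j ≤ T i j)
    (β : ℂ) (hβ : β ∈ spectrum ℂ (B.map (Complex.ofReal)))
    (habs : ‖β‖ = specRad T) :
    T = B := by
  obtain ⟨hT0, k, hk, hTk⟩ := hT
  obtain ⟨x, hx0, hx⟩ := eigenvector_of_mem_spectrum (B.map (Complex.ofReal)) β hβ
  have hn : 0 < n := by
    by_contra hcon
    push_neg at hcon
    exact hx0 (funext fun i => absurd i.isLt (by omega))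
  set lam : ℝ := specRad T with hlam
  have hlam0 : 0 ≤ lam := habs ▸ norm_nonneg β
  set y : Fin n → ℝ := fun i => ‖x i‖ with hy
  have hy0 : ∀ i, 0 ≤ y i := fun i => norm_nonneg _
  obtain ⟨j0, hj0⟩ : ∃ j, 0 < y j := by
    by_contra hcon
    push_neg at hcon
    refine hx0 (funext fun i => ?_)
    have : ‖x i‖ = 0 := le_antisymm (hcon i) (norm_nonneg _)
    simpa using norm_eq_zero.mp this
  -- Step A : lam • y ≤ B *ᵥ y entrywise
  have hA : ∀ i, lam * y i ≤ (B *ᵥ y) i := by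
    intro i
    have h1 : (B.map (Complex.ofReal) *ᵥ x) i = β * x i := by
      rw [hx]; rfl
    have h2 : ‖((B.map (Complex.ofReal) *ᵥ x) i)‖ = lam * y i := by
      rw [h1, norm_mul, habs]
    rw [← h2]
    have h3 : (B.map (Complex.ofReal) *ᵥ x) i = ∑ j, (B i j : ℂ) * x j := by
      simp [Matrix.mulVec, dotProduct, Matrix.map_apply]
    rw [h3]
    calc ‖∑ j, (B i j : ℂ) * x j‖ ≤ ∑ j, ‖(B i j : ℂ) * x j‖ :=
          norm_sum_le _ _
      _ = (B *ᵥ y) i := by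
          simp only [Matrix.mulVec, dotProduct]
          refine Finset.sum_congr rfl fun j _ => ?_
          rw [norm_mul, Complex.norm_real, Real.norm_eq_abs, abs_of_nonneg (hB0 i j)]
  have hBTy : ∀ i, (B *ᵥ y) i ≤ (T *ᵥ y) i := by
    intro i
    simp only [Matrix.mulVec, dotProduct]
    exact Finset.sum_le_sum fun j _ => mul_le_mul_of_nonneg_right (hBT i j) (hy0 j)
  have hTy : ∀ i, lam * y i ≤ (T *ᵥ y) i := fun i => le_trans (hA i) (hBTy i)
  -- positivity transfer through T^k
  have hposmv : ∀ v : Fin n → ℝ, (∀ j, 0 ≤ v j) → (∃ j, 0 < v j) →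
      ∀ i, 0 < ((T ^ k) *ᵥ v) i := by
    rintro v hv ⟨j1, hj1⟩ i
    simp only [Matrix.mulVec, dotProduct]
    exact Finset.sum_pos' (fun j _ => mul_nonneg (hTk i j).le (hv j))
      ⟨j1, Finset.mem_univ j1, mul_pos (hTk i j1) hj1⟩
  -- Step B : T *ᵥ y = lam • y
  have hEq : ∀ i, (T *ᵥ y) i = lam * y i := by
    by_contra hne
    push_neg at hne
    obtain ⟨i1, hi1⟩ := hne
    set u : Fin n → ℝ := fun i => (T *ᵥ y) i - lam * y i with hu
    have hu0 : ∀ i, 0 ≤ u i := fun i => sub_nonneg.mpr (hTy i)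
    have hu1 : 0 < u i1 := by
      rcases lt_or_eq_of_le (hu0 i1) with h | h
      · exact h
      · exact absurd (by simp only [hu] at h; linarith : (T *ᵥ y) i1 = lam * y i1) hi1
    set w : Fin n → ℝ := (T ^ k) *ᵥ y with hw
    set v : Fin n → ℝ := (T ^ k) *ᵥ u with hv
    have hwpos : ∀ i, 0 < w i := hposmv y hy0 ⟨j0, hj0⟩
    have hvpos : ∀ i, 0 < v i := hposmv u hu0 ⟨i1, hu1⟩
    have hTyd : T *ᵥ y = lam • y + u := by
      funext i
      simp only [hu, Pi.add_apply, Pi.smul_apply, smul_eq_mul]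
      ring
    have hTw : T *ᵥ w = lam • w + v := by
      have hcom : T *ᵥ w = (T ^ k) *ᵥ (T *ᵥ y) := by
        rw [hw, Matrix.mulVec_mulVec, Matrix.mulVec_mulVec, ← pow_succ, ← pow_succ']
      rw [hcom, hTyd, Matrix.mulVec_add, Matrix.mulVec_smul, hw, hv]
    have : Nonempty (Fin n) := Fin.pos_iff_nonempty.mp hn
    have hne' : (Finset.univ : Finset (Fin n)).Nonempty := Finset.univ_nonempty
    set ε : ℝ := Finset.univ.inf' hne' (fun i => v i / w i) with hε
    obtain ⟨iε, -, hiε⟩ := Finset.exists_mem_eq_inf' hne' (fun i => v i / w i)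
    have hεpos : 0 < ε := by
      rw [hε, hiε]
      exact div_pos (hvpos iε) (hwpos iε)
    have hkey : ∀ i, (lam + ε) * w i ≤ (T *ᵥ w) i := by
      intro i
      have h1 : ε ≤ v i / w i := Finset.inf'_le _ (Finset.mem_univ i)
      have h2 : ε * w i ≤ v i := by
        rw [← div_mul_cancel₀ (v i) (ne_of_gt (hwpos i))]
        exact mul_le_mul_of_nonneg_right h1 (hwpos i).le
      have h3 : (T *ᵥ w) i = lam * w i + v i := by rw [hTw]; simp
      rw [h3]
      nlinarith
    have hcontra := specRad_lower hn T hT0 w hwpos (lam + ε) (by linarith) hkey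
    rw [← hlam] at hcontra
    linarith
  -- y is strictly positive
  have hiter : ∀ m : ℕ, (T ^ m) *ᵥ y = fun i => lam ^ m * y i := by
    intro m
    induction m with
    | zero => funext i; simp [Matrix.one_mulVec]
    | succ m ih =>
      funext i
      have h1 : (T ^ (m + 1)) *ᵥ y = T *ᵥ ((T ^ m) *ᵥ y) := by
        rw [Matrix.mulVec_mulVec, ← pow_succ']
      rw [h1, ih]
      have h2 : (fun i => lam ^ m * y i) = lam ^ m • y := by funext i; simp
      rw [h2, Matrix.mulVec_smul]
      simp [hEq i]
      ring
  have hypos : ∀ i, 0 < y i := by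
    intro i
    have h1 : 0 < ((T ^ k) *ᵥ y) i := hposmv y hy0 ⟨j0, hj0⟩ i
    rw [hiter k] at h1
    simp only at h1
    nlinarith [pow_nonneg hlam0 k, hy0 i]
  -- equality of B *ᵥ y and T *ᵥ y, conclude
  have hBy : ∀ i, (B *ᵥ y) i = (T *ᵥ y) i := fun i =>
    le_antisymm (hBTy i) (by rw [hEq i]; exact hA i)
  ext i j
  have h1 : ∑ j, (T i j - B i j) * y j = 0 := by
    have h2 := hBy i
    simp only [Matrix.mulVec, dotProduct] at h2
    have : ∑ j, (T i j - B i j) * y j = ∑ j, T i j * y j - ∑ j, B i j * y j := by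
      rw [← Finset.sum_sub_distrib]
      exact Finset.sum_congr rfl fun j _ => by ring
    rw [this, h2, sub_self]
  have h2 := (Finset.sum_eq_zero_iff_of_nonneg
    (fun j _ => mul_nonneg (sub_nonneg.mpr (hBT i j)) (hy0 j))).mp h1 j (Finset.mem_univ j)
  rcases mul_eq_zero.mp h2 with h3 | h3
  · linarith [sub_eq_zero.mp h3]
  · exact absurd h3 (ne_of_gt (hypos j))
end

section
/- Let M_L = [[1,1],[0,1]] and M_R = [[1,0],[1,1]], let ℓ ≥ 1, and let m_1, n_1, …, m_ℓ, n_ℓ be positive integers. Then the spectral radius of M' = M_L^{m_1} · M_R^{n_1} · ⋯ · M_L^{m_ℓ} · M_R^{n_ℓ} is at least ((3 + √5)/2)^ℓ; equivalently, the logarithm of the spectral radius of M' is at least ℓ · log((3 + √5)/2). -/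
open Matrix

/-- The matrix with rows (1,1) and (0,1). -/
def ML : Matrix (Fin 2) (Fin 2) ℝ := !![1, 1; 0, 1]

/-- The matrix with rows (1,0) and (1,1). -/
def MR : Matrix (Fin 2) (Fin 2) ℝ := !![1, 0; 1, 1]

noncomputable def muQ : ℝ := (3 + Real.sqrt 5) / 2

lemma sqrt5_sq : Real.sqrt 5 ^ 2 = 5 := Real.sq_sqrt (by norm_num)

lemma sqrt5_gt : 2 < Real.sqrt 5 := by
  nlinarith [sqrt5_sq, Real.sqrt_nonneg 5]

lemma sqrt5_lt : Real.sqrt 5 < 3 := by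
  nlinarith [sqrt5_sq, Real.sqrt_nonneg 5]

lemma muQ_gt_one : 1 < muQ := by unfold muQ; nlinarith [sqrt5_gt]

lemma muQ_pos : 0 < muQ := lt_trans one_pos muQ_gt_one

lemma muQ_sq : muQ ^ 2 = 3 * muQ - 1 := by
  unfold muQ; nlinarith [sqrt5_sq]

lemma muQ_inv_sq : (muQ⁻¹) ^ 2 = 3 * muQ⁻¹ - 1 := by
  have h := muQ_pos
  field_simp
  nlinarith [muQ_sq]

def CM : Matrix (Fin 2) (Fin 2) ℝ := !![2, 1; 1, 1]

lemma CM_sq : CM ^ 2 = 3 • CM - 1 := by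
  rw [pow_two]
  unfold CM
  ext i j
  fin_cases i <;> fin_cases j <;>
    simp [Matrix.mul_apply, Fin.sum_univ_two, Matrix.one_apply] <;> norm_num

lemma trace_CM_pow : ∀ k : ℕ, (CM ^ k).trace = muQ ^ k + (muQ⁻¹) ^ k := by
  intro k
  induction k using Nat.twoStepInduction with
  | zero => simp [Matrix.trace]; norm_num
  | one =>
      simp only [pow_one]
      unfold CM
      rw [Matrix.trace_fin_two]
      norm_num
      have h := muQ_pos
      unfold muQ
      field_simp
      nlinarith [sqrt5_sq]
  | more k ih1 ih2 =>
      have hC : CM ^ (k + 2) = 3 • CM ^ (k + 1) - CM ^ k := by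
        rw [pow_add, CM_sq, mul_sub, mul_one, Matrix.mul_smul, ← pow_succ]
      rw [hC, Matrix.trace_sub, Matrix.trace_smul, ih1, ih2]
      have h1 : muQ ^ (k+2) = 3 * muQ ^ (k+1) - muQ ^ k := by
        rw [pow_add, muQ_sq]; ring
      have h2 : (muQ⁻¹) ^ (k+2) = 3 * (muQ⁻¹) ^ (k+1) - (muQ⁻¹) ^ k := by
        rw [pow_add, muQ_inv_sq]; ring
      rw [h1, h2]
      simp
      ring

lemma entry_mul_le {A A' B B' : Matrix (Fin 2) (Fin 2) ℝ}
    (hA0 : ∀ i j, 0 ≤ A' i j) (hB0 : ∀ i j, 0 ≤ B' i j)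
    (hA : ∀ i j, A' i j ≤ A i j) (hB : ∀ i j, B' i j ≤ B i j) :
    ∀ i j, (A' * B') i j ≤ (A * B) i j := by
  intro i j
  simp only [Matrix.mul_apply]
  apply Finset.sum_le_sum
  intro k _
  exact mul_le_mul (hA i k) (hB k j) (hB0 k j) (le_trans (hA0 i k) (hA i k))

lemma CM_pow_nonneg : ∀ k : ℕ, ∀ i j, 0 ≤ (CM ^ k) i j := by
  intro k
  induction k with
  | zero => intro i j; fin_cases i <;> fin_cases j <;> simp [Matrix.one_apply]
  | succ k ih =>
      intro i j
      rw [pow_succ, Matrix.mul_apply]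
      apply Finset.sum_nonneg
      intro t _
      apply mul_nonneg (ih i t)
      fin_cases t <;> fin_cases j <;> norm_num [CM]

lemma prod_ge_CM_pow : ∀ L : List (Matrix (Fin 2) (Fin 2) ℝ),
    (∀ A ∈ L, ∀ i j, CM i j ≤ A i j) →
    ∀ i j, (CM ^ L.length) i j ≤ L.prod i j := by
  intro L
  induction L with
  | nil => intro _ i j; simp
  | cons A L ih =>
      intro h i j
      simp only [List.prod_cons, List.length_cons]
      have hC : CM ^ (L.length + 1) = CM * CM ^ L.length := by
        rw [pow_succ']
      rw [hC]
      refine entry_mul_le (fun i j => ?_) (CM_pow_nonneg _) (h A (by simp)) (ih (fun B hB => h B (by simp [hB]))) i j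
      fin_cases i <;> fin_cases j <;> norm_num [CM]

lemma ML_pow (k : ℕ) : ML ^ k = !![1, (k : ℝ); 0, 1] := by
  induction k with
  | zero => simp [Matrix.one_fin_two]
  | succ k ih =>
      rw [pow_succ, ih]
      unfold ML
      rw [Matrix.mul_fin_two]
      push_cast
      norm_num
      ring

lemma MR_pow (k : ℕ) : MR ^ k = !![1, 0; (k : ℝ), 1] := by
  induction k with
  | zero => simp [Matrix.one_fin_two]
  | succ k ih =>
      rw [pow_succ, ih]
      unfold MR
      rw [Matrix.mul_fin_two]
      push_cast
      norm_num

lemma factor_eq (a b : ℕ) : ML ^ a * MR ^ b = !![1 + (a : ℝ) * b, (a : ℝ); (b : ℝ), 1] := by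
  rw [ML_pow, MR_pow, Matrix.mul_fin_two]
  norm_num [mul_comm]

lemma factor_ge (a b : ℕ) (ha : 1 ≤ a) (hb : 1 ≤ b) :
    ∀ i j, CM i j ≤ (ML ^ a * MR ^ b) i j := by
  rw [factor_eq]
  have ha' : (1 : ℝ) ≤ a := by exact_mod_cast ha
  have hb' : (1 : ℝ) ≤ b := by exact_mod_cast hb
  intro i j
  fin_cases i <;> fin_cases j <;> simp [CM] <;> nlinarith

lemma det_factor (a b : ℕ) : (ML ^ a * MR ^ b).det = 1 := by
  rw [factor_eq, Matrix.det_fin_two_of]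
  ring

lemma det_prod_one : ∀ L : List (Matrix (Fin 2) (Fin 2) ℝ),
    (∀ A ∈ L, A.det = 1) → L.prod.det = 1 := by
  intro L
  induction L with
  | nil => intro _; simp
  | cons A L ih =>
      intro h
      rw [List.prod_cons, Matrix.det_mul, h A (by simp), ih (fun B hB => h B (by simp [hB]))]
      ring

lemma eig_mem (M : Matrix (Fin 2) (Fin 2) ℝ) (hdet : M.det = 1) (ht : 2 ≤ M.trace) :
    ((((M.trace + Real.sqrt (M.trace ^ 2 - 4)) / 2 : ℝ)) : ℂ) ∈
      spectrum ℂ (M.map Complex.ofReal) := by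
  set t : ℝ := M.trace with htdef
  set lam : ℝ := (t + Real.sqrt (t ^ 2 - 4)) / 2 with hlam
  have hsq : Real.sqrt (t ^ 2 - 4) ^ 2 = t ^ 2 - 4 :=
    Real.sq_sqrt (by nlinarith)
  have hroot : lam ^ 2 - t * lam + 1 = 0 := by
    rw [hlam]; field_simp; nlinarith [hsq]
  rw [spectrum.mem_iff]
  intro h
  rw [Matrix.isUnit_iff_isUnit_det] at h
  have hd : (algebraMap ℂ (Matrix (Fin 2) (Fin 2) ℂ) (lam : ℂ) - M.map Complex.ofReal).det = 0 := by
    rw [Matrix.det_fin_two]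
    simp only [Matrix.sub_apply, Matrix.algebraMap_matrix_apply, Matrix.map_apply]
    norm_num
    have htr : M 0 0 + M 1 1 = t := by rw [htdef, Matrix.trace_fin_two]
    have hde : M 0 0 * M 1 1 - M 0 1 * M 1 0 = 1 := by rw [← hdet, Matrix.det_fin_two]
    have : ((lam ^ 2 - t * lam + 1 : ℝ) : ℂ) = 0 := by rw [hroot]; norm_num
    have hde' : ((M 0 0 : ℂ)) * (M 1 1 : ℂ) - (M 0 1 : ℂ) * (M 1 0 : ℂ) = 1 := by
      exact_mod_cast congrArg (fun x : ℝ => (x : ℂ)) hde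
    rw [← htr] at this
    push_cast at this
    linear_combination this + hde'
  rw [hd] at h
  exact h.ne_zero rfl

lemma specRad_ge (M : Matrix (Fin 2) (Fin 2) ℝ) (hdet : M.det = 1) (ht : 2 ≤ M.trace) :
    (M.trace + Real.sqrt (M.trace ^ 2 - 4)) / 2 ≤ specRad M := by
  set lam : ℝ := (M.trace + Real.sqrt (M.trace ^ 2 - 4)) / 2 with hlam
  have hpos : 0 ≤ lam := by
    have := Real.sqrt_nonneg (M.trace ^ 2 - 4); rw [hlam]; linarith
  apply le_csSup
  · have hfin : Set.Finite {x : ℝ | ∃ β : ℂ, β ∈ spectrum ℂ (M.map Complex.ofReal) ∧ x = ‖β‖} := by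
      have : {x : ℝ | ∃ β : ℂ, β ∈ spectrum ℂ (M.map Complex.ofReal) ∧ x = ‖β‖} =
          (fun β : ℂ => ‖β‖) '' spectrum ℂ (M.map Complex.ofReal) := by
        ext x; simp [Set.mem_image, eq_comm]
      rw [this]
      exact (Matrix.finite_spectrum _).image _
    exact hfin.bddAbove
  · exact ⟨(lam : ℂ), eig_mem M hdet ht, by rw [Complex.norm_of_nonneg hpos]⟩

lemma lam_ge (t x : ℝ) (hx : 1 ≤ x) (ht : x + x⁻¹ ≤ t) :
    x ≤ (t + Real.sqrt (t ^ 2 - 4)) / 2 := by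
  have hx0 : 0 < x := lt_of_lt_of_le one_pos hx
  have hinv : x * x⁻¹ = 1 := mul_inv_cancel₀ (ne_of_gt hx0)
  have h1 : x ^ 2 - t * x + 1 ≤ 0 := by
    have h := mul_le_mul_of_nonneg_left ht (le_of_lt hx0)
    nlinarith
  have h2 : (2 * x - t) ≤ Real.sqrt (t ^ 2 - 4) := by
    calc (2 * x - t) ≤ Real.sqrt ((2 * x - t) ^ 2) := by
          rw [Real.sqrt_sq_eq_abs]; exact le_abs_self _
      _ ≤ Real.sqrt (t ^ 2 - 4) := Real.sqrt_le_sqrt (by nlinarith)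
  linarith

theorem specRad_product_ge (ℓ : ℕ) (hℓ : 1 ≤ ℓ) (m n : Fin ℓ → ℕ)
    (hm : ∀ i, 0 < m i) (hn : ∀ i, 0 < n i) :
    ((3 + Real.sqrt 5) / 2) ^ ℓ ≤
      specRad ((List.ofFn fun i : Fin ℓ => ML ^ (m i) * MR ^ (n i)).prod) ∧
    (ℓ : ℝ) * Real.log ((3 + Real.sqrt 5) / 2) ≤
      Real.log (specRad ((List.ofFn fun i : Fin ℓ => ML ^ (m i) * MR ^ (n i)).prod)) := by
  set L : List (Matrix (Fin 2) (Fin 2) ℝ) :=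
    List.ofFn fun i : Fin ℓ => ML ^ (m i) * MR ^ (n i) with hL
  set M : Matrix (Fin 2) (Fin 2) ℝ := L.prod with hM
  have hmemL : ∀ A ∈ L, ∃ a b : ℕ, 1 ≤ a ∧ 1 ≤ b ∧ A = ML ^ a * MR ^ b := by
    intro A hA
    rw [hL, List.mem_ofFn] at hA
    obtain ⟨i, hi⟩ := hA
    exact ⟨m i, n i, hm i, hn i, hi.symm⟩
  have hlen : L.length = ℓ := by simp [hL]
  have hdet : M.det = 1 := by
    apply det_prod_one
    intro A hA
    obtain ⟨a, b, _, _, rfl⟩ := hmemL A hA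
    exact det_factor a b
  have hge : ∀ i j, (CM ^ ℓ) i j ≤ M i j := by
    rw [← hlen]
    apply prod_ge_CM_pow
    intro A hA
    obtain ⟨a, b, ha, hb, rfl⟩ := hmemL A hA
    exact factor_ge a b ha hb
  have htr : muQ ^ ℓ + (muQ ^ ℓ)⁻¹ ≤ M.trace := by
    rw [← inv_pow, ← trace_CM_pow, Matrix.trace_fin_two, Matrix.trace_fin_two]
    exact add_le_add (hge 0 0) (hge 1 1)
  have hx1 : 1 ≤ muQ ^ ℓ := one_le_pow₀ (le_of_lt muQ_gt_one)
  have hxinv : (muQ ^ ℓ)⁻¹ ≤ 1 := inv_le_one_of_one_le₀ hx1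
  have ht2 : 2 ≤ M.trace := by
    have h0 : 0 < muQ ^ ℓ := pow_pos muQ_pos ℓ
    nlinarith [mul_inv_cancel₀ (ne_of_gt h0)]
  have hkey : muQ ^ ℓ ≤ specRad M :=
    le_trans (lam_ge M.trace (muQ ^ ℓ) hx1 htr) (specRad_ge M hdet ht2)
  have hmuQ : muQ = (3 + Real.sqrt 5) / 2 := rfl
  rw [← hmuQ]
  refine ⟨hkey, ?_⟩
  rw [← Real.log_pow]
  exact Real.log_le_log (pow_pos muQ_pos ℓ) hkey
end

section
/- For every A ∈ SL(2,ℤ) with |trace(A)| > 2, the spectral radius of A is at least (3 + √5)/2. -/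
open Matrix

theorem minimal_dilatation_once_punctured_torus
    (A : Matrix.SpecialLinearGroup (Fin 2) ℤ)
    (hA : 2 < |Matrix.trace (A : Matrix (Fin 2) (Fin 2) ℤ)|) :
    (3 + Real.sqrt 5) / 2 ≤
      specRad ((A : Matrix (Fin 2) (Fin 2) ℤ).map ((↑) : ℤ → ℝ)) := by
  set M : Matrix (Fin 2) (Fin 2) ℤ := (A : Matrix (Fin 2) (Fin 2) ℤ) with hM
  set B : Matrix (Fin 2) (Fin 2) ℂ := (M.map ((↑) : ℤ → ℝ)).map Complex.ofReal with hB
  set t : ℤ := Matrix.trace M with ht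
  have htr : t = M 0 0 + M 1 1 := by rw [ht, Matrix.trace_fin_two]
  have hdet : M 0 0 * M 1 1 - M 0 1 * M 1 0 = 1 := by
    have h := A.prop
    rwa [Matrix.det_fin_two] at h
  have hBij : ∀ i j, B i j = ((M i j : ℤ) : ℂ) := by
    intro i j; simp [hB, Matrix.map_apply]
  have hspec : ∀ β : ℂ, β ∈ spectrum ℂ B ↔ β ^ 2 - (t : ℂ) * β + 1 = 0 := by
    intro β
    rw [spectrum.mem_iff, Matrix.isUnit_iff_isUnit_det, isUnit_iff_ne_zero, not_not]
    have : ((algebraMap ℂ (Matrix (Fin 2) (Fin 2) ℂ)) β - B).det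
        = β ^ 2 - (t : ℂ) * β + 1 := by
      rw [Matrix.det_fin_two]
      simp only [Matrix.sub_apply, Matrix.algebraMap_matrix_apply, hBij,
        eq_self_iff_true, if_true, Algebra.algebraMap_self, RingHom.id_apply,
        if_neg (by decide : ¬(0 : Fin 2) = 1), if_neg (by decide : ¬(1 : Fin 2) = 0)]
      have h1 : ((M 0 0 * M 1 1 - M 0 1 * M 1 0 : ℤ) : ℂ) = 1 := by rw [hdet]; norm_num
      have h2 : ((t : ℤ) : ℂ) = (M 0 0 : ℂ) + (M 1 1 : ℂ) := by rw [htr]; push_cast; ring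
      push_cast at h1
      rw [h2]
      ring_nf
      ring_nf at h1
      linear_combination h1
    rw [this]
  -- abbreviations
  set a : ℝ := |(t : ℝ)| with ha
  have ha3 : (3 : ℝ) ≤ a := by
    have : (3 : ℤ) ≤ |t| := hA
    calc (3:ℝ) = ((3:ℤ):ℝ) := by norm_num
    _ ≤ ((|t| : ℤ) : ℝ) := by exact_mod_cast this
    _ = a := by push_cast; rfl
  set s : ℝ := Real.sqrt (a ^ 2 - 4) with hs
  have hs2 : s ^ 2 = a ^ 2 - 4 := Real.sq_sqrt (by nlinarith)
  have hs0 : 0 ≤ s := Real.sqrt_nonneg _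
  -- the eigenvalue
  set ε : ℝ := if 0 ≤ (t : ℝ) then 1 else -1 with hε
  have hεt : ε * (t : ℝ) = a := by
    rw [hε, ha]
    rcases le_or_gt 0 ((t : ℝ)) with h | h
    · rw [if_pos h, abs_of_nonneg h]; ring
    · rw [if_neg (not_le.mpr h), abs_of_neg h]; ring
  set lam : ℝ := ε * ((a + s) / 2) with hlam
  have hroot : (lam : ℂ) ^ 2 - (t : ℂ) * (lam : ℂ) + 1 = 0 := by
    have hε2 : ε ^ 2 = 1 := by rw [hε]; split <;> norm_num
    have hreal : lam ^ 2 - (t : ℝ) * lam + 1 = 0 := by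
      have : lam ^ 2 = ((a + s)/2) ^ 2 := by rw [hlam, mul_pow, hε2, one_mul]
      have htlam : (t : ℝ) * lam = a * ((a + s)/2) := by
        rw [hlam]; rw [← hεt]; ring
      rw [this, htlam]; nlinarith [hs2]
    have := congrArg (Complex.ofReal) hreal
    push_cast at this
    convert this using 2
  have habs : ‖(lam : ℂ)‖ = (a + s) / 2 := by
    rw [Complex.norm_real, Real.norm_eq_abs, hlam, abs_mul]
    have : |ε| = 1 := by rw [hε]; split <;> norm_num
    rw [this, one_mul, abs_of_nonneg (by positivity)]
  -- bounded above
  have hbdd : BddAbove {x : ℝ | ∃ β : ℂ,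
      β ∈ spectrum ℂ ((M.map ((↑) : ℤ → ℝ)).map Complex.ofReal) ∧ x = ‖β‖} := by
    refine ⟨a + 1, ?_⟩
    rintro x ⟨β, hβ, rfl⟩
    rw [← hB, hspec] at hβ
    have heq : β ^ 2 = (t : ℂ) * β - 1 := by linear_combination hβ
    have h1 : ‖β‖ ^ 2 ≤ a * ‖β‖ + 1 := by
      calc ‖β‖ ^ 2 = ‖β ^ 2‖ := by rw [norm_pow]
      _ = ‖(t : ℂ) * β - 1‖ := by rw [heq]
      _ ≤ ‖(t : ℂ) * β‖ + ‖(1 : ℂ)‖ := by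
          exact (norm_sub_le _ _)
      _ = a * ‖β‖ + 1 := by
          rw [norm_mul, norm_one]
          congr 1
          rw [ha, Complex.norm_intCast]
    nlinarith [norm_nonneg β]
  -- conclude
  have hmem : (a + s) / 2 ∈ {x : ℝ | ∃ β : ℂ,
      β ∈ spectrum ℂ ((M.map ((↑) : ℤ → ℝ)).map Complex.ofReal) ∧ x = ‖β‖} :=
    ⟨(lam : ℂ), by rw [← hB, hspec]; exact hroot, habs.symm⟩
  have hle : (a + s) / 2 ≤ specRad (M.map ((↑) : ℤ → ℝ)) := le_csSup hbdd hmem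
  refine le_trans ?_ hle
  have hs5 : Real.sqrt 5 ≤ s := by
    apply Real.sqrt_le_sqrt; nlinarith
  linarith
end
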